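/- In the Two-Coin game where both players choose the pattern HT, a tie occurs with probability 5/27, and each player wins with probability 11/27. -/

import Mathlib

/-- Extend a finite binary string (`true` = heads, `false` = tails) to an
infinite sequence by padding with `false`. -/
def padFalse {i : ℕ} (v : Fin i → Bool) : ℕ → Bool :=
  fun n => if h : n < i then v ⟨n, h⟩ else false

/-- The pattern `w` occurs in the flip sequence `s` (flip `m` is `s (m-1)`)
as a consecutive substring ending at flip `m`. -/
def OccursEndingAt (w : List Bool) (s : ℕ → Bool) (m : ℕ) : Prop :=
  w.length ≤ m ∧ ∀ j : Fin w.length, s (m - w.length + (j : ℕ)) = w.get j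

/-- The first occurrence of `w` in `s` ends exactly at flip `m`. -/
def FirstOccurEndsAt (w : List Bool) (s : ℕ → Bool) (m : ℕ) : Prop :=
  OccursEndingAt w s m ∧ ∀ k < m, ¬ OccursEndingAt w s k

/-- The number of binary strings of length `i` that end with `w` and contain
no other occurrence of `w` (`w`-first-timers of length `i`). -/
noncomputable def firstTimerCount (w : List Bool) (i : ℕ) : ℕ :=
  Nat.card {v : Fin i → Bool // FirstOccurEndsAt w (padFalse v) i}

/-- The probability that `w` first appears at exactly the `i`-th fair coin flip. -/
noncomputable def firstTimeProb (w : List Bool) (i : ℕ) : ℝ :=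
  (firstTimerCount w i : ℝ) / 2 ^ i

/-- The expected number of fair coin flips until `w` first appears. -/
noncomputable def expectedWaitTime (w : List Bool) : ℝ :=
  ∑' i : ℕ, (i : ℝ) * firstTimeProb w i

lemma occurs_iff (s : ℕ → Bool) (m : ℕ) :
    OccursEndingAt [true, false] s m ↔ 2 ≤ m ∧ s (m - 2) = true ∧ s (m - 1) = false := by
  constructor
  · rintro ⟨h, hj⟩
    have h' : 2 ≤ m := h
    refine ⟨h', ?_, ?_⟩
    · simpa using hj ⟨0, by norm_num⟩
    · have := hj ⟨1, by norm_num⟩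
      simpa [show m - 2 + 1 = m - 1 by omega] using this
  · rintro ⟨h, h0, h1⟩
    refine ⟨h, ?_⟩
    intro j
    match j with
    | ⟨0, _⟩ => simpa using h0
    | ⟨1, _⟩ => simpa [show m - 2 + 1 = m - 1 by omega] using h1

def fstr (i a : ℕ) : Fin i → Bool := fun n => decide (a ≤ n.1 ∧ n.1 < i - 1)

lemma padFalse_fstr (i a n : ℕ) :
    padFalse (fstr i a) n = decide (a ≤ n ∧ n < i - 1) := by
  unfold padFalse fstr
  by_cases h : n < i
  · simp [h]
  · simp only [h, dite_false]
    symm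
    simp only [decide_eq_false_iff_not]
    rintro ⟨-, h2⟩
    omega

lemma count_HT (i : ℕ) : firstTimerCount [true, false] i = i - 1 := by
  by_cases hi : 2 ≤ i
  · unfold firstTimerCount
    have hb : Function.Bijective (fun a : Fin (i-1) =>
        (⟨fstr i a.1, by
          constructor
          · rw [occurs_iff]
            refine ⟨hi, ?_, ?_⟩
            · rw [padFalse_fstr]
              have := a.2
              simp only [decide_eq_true_iff]
              omega
            · rw [padFalse_fstr]
              simp only [decide_eq_false_iff_not]
              omega
          · intro k hk hocc
            obtain ⟨hk2, ht, hf⟩ := (occurs_iff _ _).1 hocc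
            rw [padFalse_fstr] at ht hf
            rw [decide_eq_true_iff] at ht
            rw [decide_eq_false_iff_not] at hf
            have := a.2
            omega⟩ :
        {v : Fin i → Bool // FirstOccurEndsAt [true, false] (padFalse v) i})) := by
      constructor
      · intro a b hab
        have hab' : fstr i a.1 = fstr i b.1 := congrArg Subtype.val hab
        have ha := congrFun hab' ⟨a.1, by omega⟩
        have hb := congrFun hab' ⟨b.1, by omega⟩
        unfold fstr at ha hb
        simp only [decide_eq_decide] at ha hb
        have h2a := a.2
        have h2b := b.2
        apply Fin.ext
        omega
      · rintro ⟨v, hv⟩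
        set u := padFalse v with hu
        obtain ⟨hocc, hfirst⟩ := hv
        obtain ⟨-, hT, hF⟩ := (occurs_iff _ _).1 hocc
        have mono : ∀ n, n + 2 < i → u n = true → u (n+1) = true := by
          intro n hn hun
          by_contra hc
          exact hfirst (n+2) hn ((occurs_iff _ _).2
            ⟨by omega, by simpa using hun, by simpa using Bool.eq_false_iff.2 hc⟩)
        have hex : ∃ n, u n = true := ⟨i - 2, hT⟩
        set a := Nat.find hex with hadef
        have haspec : u a = true := Nat.find_spec hex
        have hale : a ≤ i - 2 := Nat.find_min' hex hT
        have hrun : ∀ m, a ≤ m → m ≤ i - 2 → u m = true := by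
          intro m ham
          induction m, ham using Nat.le_induction with
          | base => intro _; exact haspec
          | succ m hm ih =>
            intro hm2
            exact mono m (by omega) (ih (by omega))
        refine ⟨⟨a, by omega⟩, ?_⟩
        apply Subtype.ext
        funext n
        have hn := n.2
        have hvu : v n = u n.1 := by
          simp [hu, padFalse, hn]
        show fstr i a n = v n
        rw [hvu]
        unfold fstr
        symm
        rcases lt_or_ge n.1 a with h1 | h1
        · have := Nat.find_min hex h1
          simp only [Bool.not_eq_true] at this
          rw [this]
          symm
          simp only [decide_eq_false_iff_not]
          omega
        · rcases le_or_gt n.1 (i-2) with h2 | h2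
          · rw [hrun n.1 h1 h2]
            symm
            rw [decide_eq_true_iff]
            omega
          · have hn1 : n.1 = i - 1 := by omega
            rw [hn1, hF]
            symm
            simp only [decide_eq_false_iff_not]
            omega
    have := Nat.card_eq_of_bijective _ hb
    rw [← this, Nat.card_eq_fintype_card, Fintype.card_fin]
  · unfold firstTimerCount
    have : IsEmpty {v : Fin i → Bool // FirstOccurEndsAt [true, false] (padFalse v) i} := by
      refine ⟨fun ⟨v, hv⟩ => ?_⟩
      have := ((occurs_iff _ _).1 hv.1).1
      omega
    rw [Nat.card_of_isEmpty]
    omega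

lemma prob_HT (i : ℕ) : firstTimeProb [true, false] i = ((i - 1 : ℕ) : ℝ) / 2 ^ i := by
  unfold firstTimeProb
  rw [count_HT]

lemma probHT_zero : firstTimeProb [true, false] 0 = 0 := by simp [prob_HT]

lemma probHT_one : firstTimeProb [true, false] 1 = 0 := by simp [prob_HT]

lemma prob_HT_succ (n : ℕ) :
    firstTimeProb [true, false] (n + 2) = ((n : ℝ) + 1) / 2 ^ (n + 2) := by
  rw [prob_HT, show n + 2 - 1 = n + 1 from rfl]
  push_cast
  ring

lemma choose2_cast (n : ℕ) : (((n+2).choose 2 : ℕ) : ℝ) = (n+1)*(n+2)/2 := by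
  induction n with
  | zero => norm_num
  | succ n ih =>
    rw [show n+1+2 = (n+2)+1 from rfl, Nat.choose_succ_succ]
    push_cast [Nat.choose_one_right]
    push_cast at ih
    rw [ih]
    ring

lemma partial_sum_HT (i : ℕ) :
    ∑ k ∈ Finset.range (i + 1), firstTimeProb [true, false] k
      = 1 - ((i : ℝ) + 1) / 2 ^ i := by
  induction i with
  | zero => simp [probHT_zero]
  | succ i ih =>
    rw [Finset.sum_range_succ, ih, prob_HT, show i + 1 - 1 = i from rfl]
    have h2 : (2:ℝ) ^ i ≠ 0 := by positivity
    push_cast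
    rw [pow_succ]
    field_simp
    ring

lemma pow_twofour (n : ℕ) : ((1:ℝ)/4) ^ n = 1 / (2 ^ n * 2 ^ n) := by
  rw [div_pow, one_pow, ← mul_pow]
  norm_num

/-- In the Two-Coin game where both players choose the pattern HT (each flipping
their own independent fair coin), a tie occurs with probability 5/27, and each
player wins with probability 11/27.  Here `p i = firstTimeProb [H,T] i` is the
probability that HT first appears at flip `i`; a tie has probability
`∑ pᵢ pᵢ` and each player wins with probability `∑ pᵢ (1 - ∑_{k ≤ i} p_k)`. -/
theorem twoCoin_HT_probs :
    (∑' i : ℕ, firstTimeProb [true, false] i * firstTimeProb [true, false] i) = 5 / 27 ∧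
      (∑' i : ℕ, firstTimeProb [true, false] i *
        (1 - ∑ k ∈ Finset.range (i + 1), firstTimeProb [true, false] k)) = 11 / 27 := by
  have hr : ‖(1/4 : ℝ)‖ < 1 := by rw [Real.norm_eq_abs, abs_of_nonneg] <;> norm_num
  have h2 := hasSum_choose_mul_geometric_of_norm_lt_one (𝕜 := ℝ) 2 hr
  have h1 := hasSum_choose_mul_geometric_of_norm_lt_one (𝕜 := ℝ) 1 hr
  have hx : ∀ n : ℕ, (2:ℝ) ^ n ≠ 0 := fun n => by positivity
  constructor
  · set f : ℕ → ℝ := fun i => firstTimeProb [true, false] i * firstTimeProb [true, false] i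
      with hf
    have hshift : HasSum (fun n : ℕ => f (n + 2)) (5/27) := by
      convert ((h2.mul_left 2).sub h1).mul_right (1/16) using 1
      · rfl
      · funext n
        rw [hf]
        simp only
        rw [prob_HT_succ, choose2_cast]
        push_cast [Nat.choose_one_right]
        rw [pow_twofour, pow_add]
        field_simp
        ring
      · norm_num
    have := (hasSum_nat_add_iff (f := f) 2).1 hshift
    rw [show (Finset.range 2).sum f = 0 by
      simp [hf, Finset.sum_range_succ, probHT_zero, probHT_one]] at this
    rw [add_zero] at this
    exact this.tsum_eq
  · have hfun : (fun i : ℕ => firstTimeProb [true, false] i *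
        (1 - ∑ k ∈ Finset.range (i + 1), firstTimeProb [true, false] k))
        = fun i : ℕ => firstTimeProb [true, false] i * (((i : ℝ) + 1) / 2 ^ i) := by
      funext i
      rw [partial_sum_HT]
      ring
    rw [hfun]
    set g : ℕ → ℝ := fun i => firstTimeProb [true, false] i * (((i : ℝ) + 1) / 2 ^ i)
      with hg
    have hshift : HasSum (fun n : ℕ => g (n + 2)) (11/27) := by
      convert ((h2.mul_left 2).add h1).mul_right (1/16) using 1
      · rfl
      · funext n
        rw [hg]
        simp only
        rw [prob_HT_succ, choose2_cast]
        push_cast [Nat.choose_one_right]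
        rw [pow_twofour, pow_add]
        field_simp
        ring
      · norm_num
    have := (hasSum_nat_add_iff (f := g) 2).1 hshift
    rw [show (Finset.range 2).sum g = 0 by
      simp [hg, Finset.sum_range_succ, probHT_zero, probHT_one]] at this
    rw [add_zero] at this
    exact this.tsum_eq
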